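/- Let G = (U ∪ V, E) be a bipartite graph in which every vertex of U has degree at least 1 and at most 3. Fix l ≥ 1 and an injective assignment v ↦ x_v of distinct strings x_v of length l over {A, T} to the vertices v ∈ V, and let X = {x_v : v ∈ V} be the probe set. For each u ∈ U with neighborhood N(u) = {v₁, …, v_d} (1 ≤ d ≤ 3, listed in some fixed order), let p_u be the primer obtained by concatenating the Watson-Crick complements comp(x_{v₁}), …, comp(x_{v_d}) with a single letter C inserted between consecutive blocks. Then Spec_X(p_u, {G, C}) = Spec_X(p_u) = {x_v : v ∈ N(u)}. -/

import Mathlib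

/-- The DNA alphabet Σ = {A, C, G, T}. -/
inductive Base : Type
  | A | C | G | T
  deriving DecidableEq

/-- Watson-Crick complement of a single base: A ↔ T, C ↔ G. -/
def Base.comp : Base → Base
  | A => T
  | T => A
  | C => G
  | G => C

/-- Watson-Crick complement of a string. -/
def compStr (w : List Base) : List Base := w.map Base.comp

/-- The spectrum `Spec_X(y)`: the probes `x ∈ X` whose Watson-Crick complement is a
contiguous substring (infix) of `y`. -/
def Spec (X : Finset (List Base)) (y : List Base) : Finset (List Base) :=
  X.filter (fun x => compStr x <:+: y)

/-- `Spec_X(p, E) = ⋃_{e ∈ E} Spec_X(p·e)`. -/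
def SpecE (X : Finset (List Base)) (p : List Base) (E : Finset Base) : Finset (List Base) :=
  E.biUnion (fun e => Spec X (p ++ [e]))

section Aux
variable {α : Type*}

lemma prefix_split (c : α) : ∀ (s xs : List α) (ys : List α), c ∉ s → s <+: xs ++ c :: ys → s <+: xs
  | [], _, _, _, _ => List.nil_prefix
  | a :: s, [], ys, hc, h => by
      rw [List.nil_append, List.cons_prefix_cons] at h
      exact absurd (h.1 ▸ (List.mem_cons_self : a ∈ a :: s)) hc
  | a :: s, b :: xs, ys, hc, h => by
      rw [List.cons_append, List.cons_prefix_cons] at h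
      exact List.cons_prefix_cons.mpr ⟨h.1,
        prefix_split c s xs ys (fun h' => hc (List.mem_cons_of_mem _ h')) h.2⟩

lemma infix_split (c : α) : ∀ (s xs : List α) (ys : List α), c ∉ s →
    s <:+: xs ++ c :: ys → s <:+: xs ∨ s <:+: ys
  | s, [], ys, hc, h => by
      rw [List.nil_append, List.infix_cons_iff] at h
      rcases h with h | h
      · cases s with
        | nil => exact Or.inl List.nil_infix
        | cons a s =>
          rw [List.cons_prefix_cons] at h
          exact absurd (h.1 ▸ (List.mem_cons_self : a ∈ a :: s)) hc
      · exact Or.inr h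
  | s, b :: xs, ys, hc, h => by
      rw [List.cons_append, List.infix_cons_iff] at h
      rcases h with h | h
      · exact Or.inl (prefix_split c s (b :: xs) ys hc h).isInfix
      · rcases infix_split c s xs ys hc h with h | h
        · exact Or.inl (h.trans (List.suffix_cons b xs).isInfix)
        · exact Or.inr h

/-- infix of an append of a single letter, when that letter isn't in `s`. -/
lemma infix_append_single {c : α} {s p : List α} (hc : c ∉ s) :
    s <:+: p ++ [c] ↔ s <:+: p := by
  constructor
  · intro h
    rcases infix_split c s p [] hc h with h | h
    · exact h
    · exact (List.infix_nil.mp h) ▸ List.nil_infix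
  · exact fun h => h.trans (List.prefix_append p [c]).isInfix

/-- a `c`-free string of length `l` that is an infix of `intercalate [c] blocks`,
where all blocks are `c`-free of length `l`, must be one of the blocks. -/
lemma infix_intercalate_mem (c : α) (l : ℕ) (hl : 1 ≤ l) :
    ∀ (blocks : List (List α)) (s : List α),
      (∀ b ∈ blocks, c ∉ b ∧ b.length = l) →
      c ∉ s → s.length = l → s <:+: List.intercalate [c] blocks → s ∈ blocks
  | [], s, _, _, hlen, hinf => by
      simp [List.intercalate] at hinf
      subst hinf; simp at hlen; omega
  | [b], s, hb, hc, hlen, hinf => by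
      have hone : List.intercalate [c] [b] = b := by simp [List.intercalate]
      rw [hone] at hinf
      have : s = b := hinf.eq_of_length (by rw [hlen, (hb b (by simp)).2])
      simp [this]
  | b :: b' :: bs, s, hb, hc, hlen, hinf => by
      have hrw : List.intercalate [c] (b :: b' :: bs)
          = b ++ c :: List.intercalate [c] (b' :: bs) := by
        simp [List.intercalate]
      rw [hrw] at hinf
      rcases infix_split c s b _ hc hinf with h | h
      · have : s = b := h.eq_of_length (by rw [hlen, (hb b (by simp)).2])
        simp [this]
      · have := infix_intercalate_mem c l hl (b' :: bs) s
          (fun b hb' => hb b (List.mem_cons_of_mem _ hb')) hc hlen h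
        exact List.mem_cons_of_mem _ this

lemma mem_infix_intercalate (c : α) :
    ∀ (blocks : List (List α)) (b : List α), b ∈ blocks →
      b <:+: List.intercalate [c] blocks
  | [], b, hb => by simp at hb
  | [b'], b, hb => by
      simp at hb
      simp [hb, List.intercalate]
  | b' :: b'' :: bs, b, hb => by
      have hrw : List.intercalate [c] (b' :: b'' :: bs)
          = b' ++ c :: List.intercalate [c] (b'' :: bs) := by
        simp [List.intercalate]
      rw [hrw]
      rcases List.mem_cons.mp hb with h | h
      · exact h ▸ (List.prefix_append b' _).isInfix
      · exact (mem_infix_intercalate c (b'' :: bs) b h).trans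
          ((List.suffix_cons c _).trans (List.suffix_append b' _)).isInfix

end Aux

/-- In the bipartite graph given by neighbor lists `nbrs : U → List V` (each vertex of `U`
having between 1 and 3 neighbors), with distinct probes `x v` of length `l` over `{A, T}`
assigned to the vertices `v ∈ V`, probe set `X = {x_v : v ∈ V}`, and primer
`p_u = comp(x_{v₁})·C·⋯·C·comp(x_{v_d})` for `N(u) = {v₁, …, v_d}`, one has
`Spec_X(p_u, {G, C}) = Spec_X(p_u) = {x_v : v ∈ N(u)}`. -/



theorem stmt2 {U V : Type} [DecidableEq V]
    (nbrs : U → List V)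
    (hnodup : ∀ u, (nbrs u).Nodup)
    (hdeg : ∀ u, 1 ≤ (nbrs u).length ∧ (nbrs u).length ≤ 3)
    (l : ℕ) (hl : 1 ≤ l)
    (x : V → List Base) (hinj : Function.Injective x)
    (hx : ∀ v, (x v).length = l ∧ ∀ b ∈ x v, b = Base.A ∨ b = Base.T)
    (X : Finset (List Base)) (hX : ∀ w, w ∈ X ↔ ∃ v, x v = w)
    (p : U → List Base)
    (hp : ∀ u, p u = List.intercalate [Base.C] ((nbrs u).map (fun v => compStr (x v))))
    (u : U) :
    SpecE X (p u) {Base.G, Base.C} = Spec X (p u) ∧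
      Spec X (p u) = (nbrs u).toFinset.image x := by

  have hinv : Function.Involutive Base.comp := fun b => by cases b <;> rfl
  have hcompinj : Function.Injective compStr :=
    List.map_injective_iff.mpr hinv.injective
  have hCfree : ∀ v, Base.C ∉ compStr (x v) := by
    intro v hc
    simp only [compStr, List.mem_map] at hc
    obtain ⟨b, hb, hbc⟩ := hc
    rcases (hx v).2 b hb with rfl | rfl <;> simp [Base.comp] at hbc
  have hGfree : ∀ v, Base.G ∉ compStr (x v) := by
    intro v hc
    simp only [compStr, List.mem_map] at hc
    obtain ⟨b, hb, hbc⟩ := hc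
    rcases (hx v).2 b hb with rfl | rfl <;> simp [Base.comp] at hbc
  have hlen : ∀ v, (compStr (x v)).length = l := by
    intro v; simp [compStr, (hx v).1]
  set blocks := (nbrs u).map (fun v => compStr (x v)) with hblocks
  have hpb : p u = List.intercalate [Base.C] blocks := hp u
  have hspec : ∀ w, w ∈ Spec X (p u) ↔ ∃ v ∈ nbrs u, x v = w := by
    intro w
    simp only [Spec, Finset.mem_filter, hX]
    constructor
    · rintro ⟨⟨v', rfl⟩, hinf⟩
      rw [hpb] at hinf
      have hmem := infix_intercalate_mem Base.C l hl blocks (compStr (x v'))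
        (by
          rintro b hb
          simp only [hblocks, List.mem_map] at hb
          obtain ⟨v, _, rfl⟩ := hb
          exact ⟨hCfree v, hlen v⟩)
        (hCfree v') (hlen v') hinf
      simp only [hblocks, List.mem_map] at hmem
      obtain ⟨v, hv, heq⟩ := hmem
      exact ⟨v, hv, (hinj (hcompinj heq)) ▸ rfl⟩
    · rintro ⟨v, hv, rfl⟩
      refine ⟨⟨v, rfl⟩, ?_⟩
      rw [hpb]
      exact mem_infix_intercalate Base.C blocks _
        (by simp only [hblocks, List.mem_map]; exact ⟨v, hv, rfl⟩)
  constructor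
  · ext w
    simp only [SpecE, Finset.mem_biUnion, Finset.mem_insert, Finset.mem_singleton]
    constructor
    · rintro ⟨e, he, hw⟩
      simp only [Spec, Finset.mem_filter] at hw ⊢
      obtain ⟨hwX, hinf⟩ := hw
      obtain ⟨v', rfl⟩ := (hX w).mp hwX
      refine ⟨hwX, ?_⟩
      rcases he with rfl | rfl
      · exact (infix_append_single (hGfree v')).mp hinf
      · exact (infix_append_single (hCfree v')).mp hinf
    · intro hw
      simp only [Spec, Finset.mem_filter] at hw ⊢
      obtain ⟨hwX, hinf⟩ := hw
      obtain ⟨v', rfl⟩ := (hX _).mp hwX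
      exact ⟨Base.G, Or.inl rfl, hwX, (infix_append_single (hGfree v')).mpr hinf⟩
  · ext w
    simp only [hspec w, Finset.mem_image, List.mem_toFinset]
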